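/- Let G be a pancyclic graph with n > 6 vertices and Hamiltonian cycle H, and let A be an arc of H whose two endpoints are joined by a chord, with |A| ≥ (n+2)/3 edges. Then the contraction G_A of one edge of A is pancyclic on n−1 vertices. -/

import Mathlib

open SimpleGraph

/-- `G` has a cycle of length `k`. -/
def HasCycleLength {V : Type*} (G : SimpleGraph V) (k : ℕ) : Prop :=
  ∃ (v : V) (w : G.Walk v v), w.IsCycle ∧ w.length = k

/-- A graph on a finite vertex type is pancyclic if it has a cycle of every
length `k` with `3 ≤ k ≤ n`, where `n` is the number of vertices. -/
def Pancyclic {V : Type*} [Fintype V] (G : SimpleGraph V) : Prop :=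
  ∀ k : ℕ, 3 ≤ k → k ≤ Fintype.card V → HasCycleLength G k

/-- `m n` is the minimum number of edges of a pancyclic graph on `n` vertices. -/
noncomputable def m (n : ℕ) : ℕ :=
  sInf {e | ∃ G : SimpleGraph (Fin n), Pancyclic G ∧ G.edgeSet.ncard = e}

/-- Contract the edge `{u, v}` of `G`: delete `u` and attach its neighbors to `v`. -/
def contractEdge {V : Type*} (G : SimpleGraph V) (u v : V) :
    SimpleGraph {x : V // x ≠ u} where
  Adj a b := a ≠ b ∧
    (G.Adj a b ∨ ((a : V) = v ∧ G.Adj u b) ∨ ((b : V) = v ∧ G.Adj a u))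
  symm := by
    constructor
    rintro a b ⟨hab, h⟩
    refine ⟨hab.symm, ?_⟩
    rcases h with h | ⟨h1, h2⟩ | ⟨h1, h2⟩
    · exact Or.inl h.symm
    · exact Or.inr (Or.inr ⟨h1, h2.symm⟩)
    · exact Or.inr (Or.inl ⟨h1, h2.symm⟩)
  loopless := ⟨fun a h => h.1 rfl⟩

/-- `a, a+1, …, a+L` is an arc of the standard Hamiltonian cycle `0,1,…,n-1` of
`G` on `ZMod n`: a maximal path of the cycle all of whose interior vertices have
degree 2 (maximality: the two endpoints have degree greater than 2). -/
def IsArc {n : ℕ} (G : SimpleGraph (ZMod n)) (a : ZMod n) (L : ℕ) : Prop :=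
  L < n ∧
  (∀ t : ℕ, 0 < t → t < L → (G.neighborSet (a + (t : ZMod n))).ncard = 2) ∧
  2 < (G.neighborSet a).ncard ∧ 2 < (G.neighborSet (a + (L : ZMod n))).ncard

section generic
variable {V : Type*} {G : SimpleGraph V} {v x y : V}

lemma loop_path_nil {p : G.Walk v v} (hp : p.IsPath) : p = Walk.nil := by
  cases p with
  | nil => rfl
  | cons h q =>
    exfalso
    have h1 := hp.support_nodup
    rw [Walk.support_cons] at h1
    exact (List.nodup_cons.mp h1).1 q.end_mem_support

lemma endpoints_edge_not_mem {p : G.Walk x y} (hp : p.IsPath) (h2 : 2 ≤ p.length) :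
    s(x, y) ∉ p.edges := by
  intro hmem
  cases p with
  | nil => simp at hmem
  | cons h q =>
    rename_i z
    rw [Walk.edges_cons, List.mem_cons] at hmem
    rcases hmem with he | he
    · rw [Sym2.eq_iff] at he
      rcases he with ⟨-, hyz⟩ | ⟨hxz, -⟩
      · subst hyz
        have : q = Walk.nil := loop_path_nil hp.of_cons
        subst this
        simp at h2
      · exact h.ne hxz
    · have := Walk.fst_mem_support_of_mem_edges q he
      exact ((Walk.cons_isPath_iff h q).mp hp).2 this

lemma my_length_rotate [DecidableEq V] (c : G.Walk v v) (h : x ∈ c.support) :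
    (c.rotate _ h).length = c.length := by
  have := congrArg Walk.length (c.take_spec h)
  rw [Walk.length_append] at this
  rw [Walk.rotate, Walk.length_append]
  omega

lemma mem_support_rotate [DecidableEq V] {c : G.Walk v v} (h : x ∈ c.support) {z : V}
    (hz : z ∈ (c.rotate _ h).support) : z ∈ c.support := by
  rw [Walk.support_eq_cons (c.rotate _ h), List.mem_cons] at hz
  rcases hz with rfl | hz
  · exact h
  · have htail := (Walk.support_rotate c _ h).mem_iff.mp hz
    rw [Walk.support_eq_cons c]
    exact List.mem_cons_of_mem _ htail

/-- The support of a walk `q : x → v` ends with `v`. -/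
lemma support_eq_dropLast {q : G.Walk x v} : q.support = q.support.dropLast ++ [v] := by
  have h1 : q.support.reverse = v :: q.support.dropLast.reverse := by
    have := Walk.support_eq_cons q.reverse
    rw [Walk.support_reverse] at this
    rw [this, List.tail_reverse]
  have := congrArg List.reverse h1
  simpa using this

lemma cycle_reverse {p : G.Walk v v} (hp : p.IsCycle) : p.reverse.IsCycle := by
  obtain ⟨x, h, q, hq⟩ := Walk.not_nil_iff.mp hp.not_nil
  subst hq
  have hq' := (Walk.cons_isCycle_iff q h).mp hp
  obtain ⟨hqpath, hqe⟩ := hq'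
  rw [Walk.isCycle_def]
  refine ⟨(Walk.reverse_isTrail_iff _).mpr hp.isCircuit.isTrail, ?_, ?_⟩
  · intro hnil
    apply hp.ne_nil
    have := congrArg Walk.reverse hnil
    rwa [Walk.reverse_reverse, Walk.reverse_nil] at this
  · have h2 : q.support = q.support.dropLast ++ [v] := support_eq_dropLast
    have hnd : q.support.Nodup := hqpath.support_nodup
    rw [h2] at hnd
    have h3 : q.support.reverse = v :: q.support.dropLast.reverse := by rw [h2]; simp
    rw [Walk.reverse_cons, Walk.support_append, Walk.support_reverse, h3]
    simp only [Walk.support_cons, Walk.support_nil, List.tail_cons, List.cons_append]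
    exact ((q.support.dropLast.reverse_perm.append_right [v]).nodup_iff).mpr hnd

lemma cycle_fst_last_ne {p : G.Walk v v} (hp : p.IsCycle)
    {q : G.Walk x v} {h : G.Adj v x} (hq : p = Walk.cons h q)
    {Q : G.Walk v y} {h' : G.Adj y v} (hQ : p = Q.concat h') : x ≠ y := by
  intro hxy
  subst hxy
  have hnd : p.edges.Nodup := hp.isCircuit.isTrail.edges_nodup
  have he1 : p.edges = s(v, x) :: q.edges := by rw [hq, Walk.edges_cons]
  have he2 : p.edges = Q.edges.concat s(x, v) := by rw [hQ, Walk.edges_concat]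
  have hQne : Q.edges ≠ [] := by
    have h3 := hp.three_le_length
    have hl : Q.edges.length = Q.length := Walk.length_edges Q
    have hql : Q.length + 1 = p.length := by rw [hQ, Walk.length_concat]
    intro h0; rw [h0] at hl; simp at hl; omega
  obtain ⟨E, Es, hQE⟩ := List.exists_cons_of_ne_nil hQne
  rw [he1, hQE] at he2
  rw [List.concat_eq_append, List.cons_append, List.cons.injEq] at he2
  obtain ⟨hE, hrest⟩ := he2
  have : s(v, x) ∈ q.edges := by
    rw [hrest, Sym2.eq_swap]
    simp
  rw [he1] at hnd
  exact (List.nodup_cons.mp hnd).1 this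

lemma cycle_two_ends {p : G.Walk v v} (hp : p.IsCycle) :
    ∃ x y, x ≠ y ∧ G.Adj v x ∧ G.Adj v y ∧ x ∈ p.support ∧ y ∈ p.support := by
  obtain ⟨x, h, q, hq⟩ := Walk.not_nil_iff.mp hp.not_nil
  obtain ⟨y, Q, h', hQ⟩ := Walk.exists_cons_eq_concat h q
  rw [← hq] at hQ
  refine ⟨x, y, cycle_fst_last_ne hp hq hQ, h, h'.symm, ?_, ?_⟩
  · rw [hq, Walk.support_cons]
    exact List.mem_cons_of_mem _ q.start_mem_support
  · rw [hQ, Walk.support_concat]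
    have : y ∈ Q.support := Q.end_mem_support
    simp [this]

/-- orient a cycle at `v` so its first step goes to `c`, given `v` has neighbor set `{b, c}`. -/
lemma cycle_orient {b c : V} {p : G.Walk v v} (hp : p.IsCycle)
    (hnb : G.neighborSet v = {b, c}) (hbc : b ≠ c) :
    ∃ (p' : G.Walk v v) (hadj : G.Adj v c) (q : G.Walk c v),
      p'.IsCycle ∧ p'.length = p.length ∧ p' = Walk.cons hadj q := by
  obtain ⟨x, h, q, hq⟩ := Walk.not_nil_iff.mp hp.not_nil
  have hx : x ∈ G.neighborSet v := h
  rw [hnb] at hx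
  rcases hx with rfl | rfl
  · obtain ⟨y, Q, h', hQ⟩ := Walk.exists_cons_eq_concat h q
    rw [← hq] at hQ
    have hy : y ∈ G.neighborSet v := h'.symm
    rw [hnb] at hy
    have hne := cycle_fst_last_ne hp hq hQ
    rcases hy with rfl | rfl
    · exact absurd rfl hne
    · refine ⟨p.reverse, h'.symm, Q.reverse, cycle_reverse hp, Walk.length_reverse p, ?_⟩
      rw [hQ, Walk.reverse_concat]
  · exact ⟨p, h, q, hp, rfl, hq⟩

end generic

section lift
variable {V : Type*} {G : SimpleGraph V} {u₀ v₀ : V}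

def liftWalk : ∀ {x y : V} (p : G.Walk x y) (h : ∀ z ∈ p.support, z ≠ u₀),
    (contractEdge G u₀ v₀).Walk ⟨x, h x p.start_mem_support⟩ ⟨y, h y p.end_mem_support⟩
  | _, _, Walk.nil, _ => Walk.nil
  | _, _, Walk.cons hadj q, h =>
      Walk.cons (show (contractEdge G u₀ v₀).Adj _ _ from And.intro (fun hh => hadj.ne (congrArg Subtype.val hh)) (Or.inl hadj))
        (liftWalk q (fun z hz => h z (by rw [Walk.support_cons]; exact List.mem_cons_of_mem _ hz)))

lemma support_liftWalk : ∀ {x y : V} (p : G.Walk x y) (h : ∀ z ∈ p.support, z ≠ u₀),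
    (liftWalk (v₀ := v₀) p h).support.map Subtype.val = p.support
  | _, _, Walk.nil, _ => rfl
  | _, _, Walk.cons hadj q, h => by
      rw [liftWalk, Walk.support_cons, Walk.support_cons, List.map_cons, support_liftWalk]

lemma edges_liftWalk : ∀ {x y : V} (p : G.Walk x y) (h : ∀ z ∈ p.support, z ≠ u₀),
    (liftWalk (v₀ := v₀) p h).edges.map (Sym2.map Subtype.val) = p.edges
  | _, _, Walk.nil, _ => rfl
  | _, _, Walk.cons hadj q, h => by
      rw [liftWalk, Walk.edges_cons, Walk.edges_cons, List.map_cons, edges_liftWalk]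
      rfl

lemma length_liftWalk : ∀ {x y : V} (p : G.Walk x y) (h : ∀ z ∈ p.support, z ≠ u₀),
    (liftWalk (v₀ := v₀) p h).length = p.length
  | _, _, Walk.nil, _ => rfl
  | _, _, Walk.cons hadj q, h => by
      rw [liftWalk, Walk.length_cons, Walk.length_cons, length_liftWalk]

lemma liftWalk_isPath {x y : V} {p : G.Walk x y} (h : ∀ z ∈ p.support, z ≠ u₀)
    (hp : p.IsPath) : (liftWalk (v₀ := v₀) p h).IsPath := by
  apply Walk.IsPath.mk'
  have := hp.support_nodup
  rw [← support_liftWalk (v₀ := v₀) p h] at this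
  exact this.of_map _

lemma liftWalk_isCycle {v : V} {p : G.Walk v v} (h : ∀ z ∈ p.support, z ≠ u₀)
    (hp : p.IsCycle) : (liftWalk (v₀ := v₀) p h).IsCycle := by
  rw [Walk.isCycle_def]
  refine ⟨⟨?_⟩, ?_, ?_⟩
  · have := hp.isCircuit.isTrail.edges_nodup
    rw [← edges_liftWalk (v₀ := v₀) p h] at this
    exact this.of_map _
  · intro hnil
    have := congrArg Walk.length hnil
    rw [length_liftWalk] at this
    have h3 := hp.three_le_length
    simp only [Walk.length_nil] at this
    omega
  · have := hp.support_nodup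
    rw [← support_liftWalk (v₀ := v₀) p h, ← List.map_tail] at this
    exact this.of_map _

lemma mem_edges_liftWalk {x y : V} {p : G.Walk x y} {h : ∀ z ∈ p.support, z ≠ u₀}
    {b₁ b₂ : {z : V // z ≠ u₀}} (hm : s(b₁, b₂) ∈ (liftWalk (v₀ := v₀) p h).edges) :
    s((b₁ : V), (b₂ : V)) ∈ p.edges := by
  rw [← edges_liftWalk (v₀ := v₀) p h]
  have := List.mem_map_of_mem (f := Sym2.map Subtype.val) hm
  rwa [Sym2.map_pair_eq] at this

end lift

section main
variable {n : ℕ} [NeZero n] {G : SimpleGraph (ZMod n)} {a : ZMod n} {L : ℕ}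

lemma zmod_add_inj {s t : ℕ} (hs : s < n) (ht : t < n) :
    a + (s : ZMod n) = a + (t : ZMod n) ↔ s = t := by
  constructor
  · intro h
    have h2 := add_left_cancel h
    have := congrArg ZMod.val h2
    rwa [ZMod.val_cast_of_lt hs, ZMod.val_cast_of_lt ht] at this
  · rintro rfl; rfl

lemma step_adj (hH : ∀ i : ZMod n, G.Adj i (i + 1)) (t : ℕ) :
    G.Adj (a + (t : ZMod n)) (a + ((t + 1 : ℕ) : ZMod n)) := by
  have h1 : a + (t : ZMod n) + 1 = a + ((t + 1 : ℕ) : ZMod n) := by push_cast; ring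
  have := hH (a + (t : ZMod n))
  rwa [h1] at this

lemma nbhd_interior (hH : ∀ i : ZMod n, G.Adj i (i + 1)) (hA : IsArc G a L)
    {t : ℕ} (h1 : 1 ≤ t) (htL : t < L) :
    G.neighborSet (a + (t : ZMod n)) =
      {a + ((t - 1 : ℕ) : ZMod n), a + ((t + 1 : ℕ) : ZMod n)} := by
  have hLn := hA.1
  have hne : a + ((t - 1 : ℕ) : ZMod n) ≠ a + ((t + 1 : ℕ) : ZMod n) := by
    rw [Ne, zmod_add_inj (by omega) (by omega)]; omega
  have hsub : {a + ((t - 1 : ℕ) : ZMod n), a + ((t + 1 : ℕ) : ZMod n)} ⊆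
      G.neighborSet (a + (t : ZMod n)) := by
    intro z hz
    simp only [Set.mem_insert_iff, Set.mem_singleton_iff] at hz
    rcases hz with rfl | rfl
    · have := step_adj (a := a) hH (t - 1)
      rw [show t - 1 + 1 = t by omega] at this
      exact this.symm
    · exact step_adj hH t
  have hcard : (G.neighborSet (a + (t : ZMod n))).ncard ≤
      ({a + ((t - 1 : ℕ) : ZMod n), a + ((t + 1 : ℕ) : ZMod n)} : Set (ZMod n)).ncard := by
    rw [Set.ncard_pair hne, hA.2.1 t (by omega) htL]
  exact (Set.eq_of_subset_of_ncard_le hsub hcard (Set.toFinite _)).symm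

lemma nbhd_one (hH : ∀ i : ZMod n, G.Adj i (i + 1)) (hA : IsArc G a L) (hL2 : 2 ≤ L) :
    G.neighborSet (a + 1) = {a, a + ((2 : ℕ) : ZMod n)} := by
  have h := nbhd_interior (a := a) hH hA (t := 1) le_rfl (by omega)
  have e1 : a + ((1 : ℕ) : ZMod n) = a + 1 := by norm_num
  have e0 : a + ((1 - 1 : ℕ) : ZMod n) = a := by norm_num
  rw [e1, e0] at h
  exact h

lemma oriented (hH : ∀ i : ZMod n, G.Adj i (i + 1)) (hA : IsArc G a L) (hL2 : 2 ≤ L)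
    {v : ZMod n} {C : G.Walk v v} (hC : C.IsCycle) (hmem : a + 1 ∈ C.support) :
    ∃ (w : G.Walk (a+1) (a+1)) (hadj : G.Adj (a+1) (a + ((2:ℕ) : ZMod n)))
      (q : G.Walk (a + ((2:ℕ) : ZMod n)) (a+1)),
      w.IsCycle ∧ w.length = C.length ∧ w = Walk.cons hadj q := by
  classical
  have hLn := hA.1
  have hbc : a ≠ a + ((2:ℕ) : ZMod n) := by
    have := (zmod_add_inj (a := a) (s := 0) (t := 2) (by omega) (by omega))
    simp only [Nat.cast_zero, add_zero] at this
    rw [Ne, this]; omega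
  obtain ⟨p', hadj, q, hcyc, hlen, heq⟩ :=
    cycle_orient (hC.rotate hmem) (nbhd_one hH hA hL2) hbc
  exact ⟨p', hadj, q, hcyc, by rw [hlen, my_length_rotate], heq⟩

lemma arc_decomp (hH : ∀ i : ZMod n, G.Adj i (i + 1)) (hA : IsArc G a L) (hL3 : 3 ≤ L)
    {w : G.Walk (a+1) (a+1)} (hw : w.IsCycle)
    {hadj : G.Adj (a+1) (a + ((2:ℕ) : ZMod n))} {q : G.Walk (a + ((2:ℕ):ZMod n)) (a+1)}
    (hweq : w = Walk.cons hadj q) :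
    ∃ P : G.Walk (a + (L : ZMod n)) a, P.IsPath ∧ P.length + L = w.length ∧ 1 ≤ P.length ∧
      ∀ s : ℕ, 1 ≤ s → s < L → a + (s : ZMod n) ∉ P.support := by
  have hLn := hA.1
  have h3 := hw.three_le_length
  have hqfull := (Walk.cons_isCycle_iff q hadj).mp (hweq ▸ hw)
  have hqlen : q.length + 1 = w.length := by rw [hweq, Walk.length_cons]
  have hone : (a + ((1:ℕ) : ZMod n)) = a + 1 := by norm_num
  have chain : ∀ t : ℕ, 2 ≤ t → t ≤ L → ∃ Q : G.Walk (a + (t : ZMod n)) (a+1),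
      Q.IsPath ∧ Q.length + t = w.length + 1 ∧
      ∀ s : ℕ, 2 ≤ s → s < t → a + (s : ZMod n) ∉ Q.support := by
    intro t h2t
    induction t, h2t using Nat.le_induction with
    | base =>
      intro _
      exact ⟨q, hqfull.1, by omega, fun s h2 hlt => by exact absurd hlt (by omega)⟩
    | succ t h2t ih =>
      intro htL
      obtain ⟨Q, hQpath, hQlen, hQex⟩ := ih (by omega)
      have hne : a + (t : ZMod n) ≠ a + 1 := by
        rw [← hone, Ne, zmod_add_inj (by omega) (by omega)]; omega
      obtain ⟨x, hxadj, Q', hQeq⟩ := (Walk.not_nil_iff (p := Q)).mp (Walk.not_nil_of_ne hne)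
      have hxnb : x ∈ G.neighborSet (a + (t : ZMod n)) := hxadj
      rw [nbhd_interior hH hA (by omega) (by omega)] at hxnb
      simp only [Set.mem_insert_iff, Set.mem_singleton_iff] at hxnb
      have hQ'sup : Q'.support ⊆ Q.support := by
        intro z hz
        rw [hQeq, Walk.support_cons]
        exact List.mem_cons_of_mem _ hz
      rcases hxnb with hx1 | hx2
      · exfalso
        by_cases ht2 : t = 2
        · subst ht2
          have hx1' : x = a + 1 := by rw [hx1]; norm_num
          have hQ'path : (Q'.copy hx1' rfl).IsPath := by
            rw [Walk.isPath_copy]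
            exact ((Walk.cons_isPath_iff _ _).mp (hQeq ▸ hQpath)).1
          have hnil := loop_path_nil hQ'path
          have hQ'0 : Q'.length = 0 := by
            have := congrArg Walk.length hnil
            simpa using this
          have hQ1 : Q.length = 1 := by rw [hQeq, Walk.length_cons]; omega
          omega
        · exact hQex (t-1) (by omega) (by omega) (hx1 ▸ hQ'sup Q'.start_mem_support)
      · subst hx2
        refine ⟨Q', ((Walk.cons_isPath_iff _ _).mp (hQeq ▸ hQpath)).1, ?_, ?_⟩
        · have : Q.length = Q'.length + 1 := by rw [hQeq, Walk.length_cons]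
          omega
        · intro s h2s hst
          rcases Nat.lt_or_ge s t with hlt | hge
          · exact fun hmem => hQex s h2s hlt (hQ'sup hmem)
          · have hst' : s = t := by omega
            subst hst'
            exact ((Walk.cons_isPath_iff _ _).mp (hQeq ▸ hQpath)).2
  obtain ⟨Q, hQpath, hQlen, hQex⟩ := chain L (by omega) le_rfl
  have hneL : a + (L : ZMod n) ≠ a + 1 := by
    rw [← hone, Ne, zmod_add_inj (by omega) (by omega)]; omega
  obtain ⟨x, hxadj, Q', hQeq⟩ := (Walk.not_nil_iff (p := Q)).mp (Walk.not_nil_of_ne hneL)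
  have hQlen2 : 2 ≤ Q.length := by
    by_contra hcon
    push_neg at hcon
    have hQl1 : Q.length = 1 := by
      have h0 : Q.length ≠ 0 := fun h0 => hneL (Walk.eq_of_length_eq_zero h0)
      omega
    have hQ'0 : Q'.length = 0 := by
      have : Q.length = Q'.length + 1 := by rw [hQeq, Walk.length_cons]
      omega
    have hx1 : x = a + 1 := Walk.eq_of_length_eq_zero hQ'0
    subst hx1
    have hmem : a + (L : ZMod n) ∈ G.neighborSet (a+1) := hxadj.symm
    rw [nbhd_one hH hA (by omega)] at hmem
    simp only [Set.mem_insert_iff, Set.mem_singleton_iff] at hmem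
    rcases hmem with h | h
    · have h' : a + ((L:ℕ) : ZMod n) = a + ((0:ℕ) : ZMod n) := by simpa using h
      rw [zmod_add_inj (by omega) (by omega)] at h'
      omega
    · rw [zmod_add_inj (by omega) (by omega)] at h
      omega
  obtain ⟨y, R, h', hcc⟩ := Walk.exists_cons_eq_concat hxadj Q'
  rw [← hQeq] at hcc
  have hsupQ : Q.support = R.support ++ [a+1] := by
    rw [hcc, Walk.support_concat]
  have hRsub : R.support ⊆ Q.support := by
    rw [hsupQ]; exact fun z hz => List.mem_append_left _ hz
  have hynb : y ∈ G.neighborSet (a+1) := h'.symm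
  rw [nbhd_one hH hA (by omega)] at hynb
  simp only [Set.mem_insert_iff, Set.mem_singleton_iff] at hynb
  have hymem : y ∈ Q.support := hRsub R.end_mem_support
  rcases hynb with rfl | rfl
  · have hQnodup := hQpath.support_nodup
    rw [hsupQ, List.nodup_append] at hQnodup
    obtain ⟨hRnodup, -, hdisj⟩ := hQnodup
    have hQRlen : Q.length = R.length + 1 := by rw [hcc, Walk.length_concat]
    refine ⟨R, Walk.IsPath.mk' hRnodup, by omega, by omega, ?_⟩
    intro s h1s hsL hmem
    rcases Nat.lt_or_ge s 2 with h | h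
    · have hs1 : s = 1 := by omega
      subst hs1
      exact hdisj _ hmem _ (List.mem_singleton_self _) hone
    · exact hQex s h hsL (hRsub hmem)
  · exact absurd hymem (hQex 2 le_rfl (by omega))

lemma fne {s t : ℕ} (hs : s < n) (ht : t < n) (hst : s ≠ t) :
    a + (s : ZMod n) ≠ a + (t : ZMod n) := by
  rw [Ne, zmod_add_inj hs ht]; exact hst

lemma a_ne_a1 (hn1 : 1 < n) : a ≠ a + 1 := by
  have := fne (a := a) (s := 0) (t := 1) (by omega) (by omega) (by omega)
  simpa using this

lemma contract_cycle (hH : ∀ i : ZMod n, G.Adj i (i + 1)) (hA : IsArc G a L) (hL3 : 3 ≤ L)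
    {v : ZMod n} {C : G.Walk v v} (hC : C.IsCycle) (hmem : a + 1 ∈ C.support) :
    HasCycleLength (contractEdge G (a+1) a) (C.length - 1) := by
  have hLn := hA.1
  have hone : (a + ((1:ℕ) : ZMod n)) = a + 1 := by norm_num
  have hzero : (a + ((0:ℕ) : ZMod n)) = a := by norm_num
  obtain ⟨w, hadj, q, hwcyc, hwlen, hweq⟩ := oriented hH hA (by omega) hC hmem
  have h3 := hwcyc.three_le_length
  have hq := (Walk.cons_isCycle_iff q hadj).mp (hweq ▸ hwcyc)
  have hqlen : q.length + 1 = w.length := by rw [hweq, Walk.length_cons]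
  have hne2 : a + ((2:ℕ) : ZMod n) ≠ a + 1 := by
    rw [← hone]; exact fne (by omega) (by omega) (by omega)
  obtain ⟨x, hxadj, q', hqeq⟩ := (Walk.not_nil_iff (p := q)).mp (Walk.not_nil_of_ne hne2)
  obtain ⟨y, T, h', hcc⟩ := Walk.exists_cons_eq_concat hxadj q'
  rw [← hqeq] at hcc
  have hsupq : q.support = T.support ++ [a+1] := by
    rw [hcc, Walk.support_concat]
  have hqnodup := hq.1.support_nodup
  rw [hsupq, List.nodup_append] at hqnodup
  obtain ⟨hTnodup, -, hdisj⟩ := hqnodup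
  have hTpath : T.IsPath := Walk.IsPath.mk' hTnodup
  have hTlen : q.length = T.length + 1 := by rw [hcc, Walk.length_concat]
  have hynb : y ∈ G.neighborSet (a+1) := h'.symm
  rw [nbhd_one hH hA (by omega)] at hynb
  simp only [Set.mem_insert_iff, Set.mem_singleton_iff] at hynb
  rcases hynb with hy | hy
  · -- y = a : build the contracted cycle
    have hy' : a = y := hy.symm
    subst hy' 
    have havoid : ∀ z ∈ T.support, z ≠ a + 1 := by
      intro z hz hz1
      exact hdisj z hz _ (List.mem_singleton_self _) hz1
    have ha1 : (a : ZMod n) ≠ a + 1 := a_ne_a1 (by omega)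
    have hGA : (contractEdge G (a+1) a).Adj ⟨a, ha1⟩ ⟨a + ((2:ℕ) : ZMod n), hne2⟩ := by
      refine And.intro ?_ (Or.inr (Or.inl ⟨rfl, hadj⟩))
      intro hh
      have := congrArg Subtype.val hh
      simp only at this
      nth_rewrite 1 [← hzero] at this
      rw [zmod_add_inj (by omega) (by omega)] at this
      omega
    refine ⟨⟨a, ha1⟩, Walk.cons hGA (liftWalk T havoid), ?_, ?_⟩
    · rw [Walk.cons_isCycle_iff]
      refine ⟨liftWalk_isPath havoid hTpath, ?_⟩
      intro hmem'
      have hmm := mem_edges_liftWalk hmem'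
      have hadj2 := Walk.adj_of_mem_edges T hmm
      have hmm2 : a ∈ G.neighborSet (a + ((2:ℕ) : ZMod n)) := hadj2.symm
      rw [nbhd_interior hH hA (t := 2) (by omega) (by omega)] at hmm2
      simp only [Set.mem_insert_iff, Set.mem_singleton_iff] at hmm2
      rcases hmm2 with h | h
      · nth_rewrite 1 [← hzero] at h
        rw [zmod_add_inj (by omega) (by omega)] at h
        omega
      · nth_rewrite 1 [← hzero] at h
        rw [zmod_add_inj (by omega) (by omega)] at h
        omega
    · rw [Walk.length_cons, length_liftWalk]
      omega
  · -- y = a + 2 : impossible (T would be a path loop)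
    subst hy
    exfalso
    have hTnil := loop_path_nil hTpath
    have hT0 : T.length = 0 := by
      have := congrArg Walk.length hTnil
      simpa using this
    omega

lemma chord_cycle (hH : ∀ i : ZMod n, G.Adj i (i + 1)) (hA : IsArc G a L) (hL3 : 3 ≤ L)
    (hchord : G.Adj a (a + (L : ZMod n)))
    {v : ZMod n} {C : G.Walk v v} (hC : C.IsCycle) (hmem : a + 1 ∈ C.support)
    (hr : L + 2 ≤ C.length) :
    HasCycleLength (contractEdge G (a+1) a) (C.length - L + 1) := by
  have hLn := hA.1
  have hone : (a + ((1:ℕ) : ZMod n)) = a + 1 := by norm_num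
  obtain ⟨w, hadj, q, hwcyc, hwlen, hweq⟩ := oriented hH hA (by omega) hC hmem
  obtain ⟨P, hPpath, hPlen, hP1, hPex⟩ := arc_decomp hH hA hL3 hwcyc hweq
  have hP2 : 2 ≤ P.length := by omega
  have hIs : (Walk.cons hchord P).IsCycle := by
    rw [Walk.cons_isCycle_iff]
    refine ⟨hPpath, ?_⟩
    intro hmem'
    have hnot := endpoints_edge_not_mem hPpath hP2
    rw [Sym2.eq_swap] at hmem'
    exact hnot hmem'
  have ha1 : (a : ZMod n) ≠ a + 1 := a_ne_a1 (by omega)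
  have havoid : ∀ z ∈ (Walk.cons hchord P).support, z ≠ a + 1 := by
    intro z hz
    rw [Walk.support_cons] at hz
    rcases List.mem_cons.mp hz with rfl | hz'
    · exact ha1
    · intro hz1
      subst hz1
      exact hPex 1 le_rfl (by omega) (by rwa [hone])
  refine ⟨⟨a, ha1⟩, liftWalk _ havoid, liftWalk_isCycle havoid hIs, ?_⟩
  rw [length_liftWalk, Walk.length_cons]
  omega

lemma interior_reach (hH : ∀ i : ZMod n, G.Adj i (i + 1)) (hA : IsArc G a L) (hL3 : 3 ≤ L) :
    ∀ s : ℕ, 1 ≤ s → s < L → ∀ {v : ZMod n} {C : G.Walk v v}, C.IsCycle →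
      a + (s : ZMod n) ∈ C.support → a + 1 ∈ C.support := by
  classical
  have hLn := hA.1
  have hone : (a + ((1:ℕ) : ZMod n)) = a + 1 := by norm_num
  intro s
  induction s with
  | zero => intro h; exact absurd h (by omega)
  | succ s ih =>
    intro h1 hsL v C hC hmem
    by_cases hs0 : s = 0
    · subst hs0
      rwa [hone] at hmem
    · have hrot := hC.rotate hmem
      obtain ⟨x, y, hxy, hax, hay, hxs, hys⟩ := cycle_two_ends hrot
      have hxnb : x ∈ G.neighborSet (a + ((s+1 : ℕ) : ZMod n)) := hax
      have hynb : y ∈ G.neighborSet (a + ((s+1 : ℕ) : ZMod n)) := hay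
      rw [nbhd_interior hH hA (by omega) hsL] at hxnb hynb
      simp only [Set.mem_insert_iff, Set.mem_singleton_iff] at hxnb hynb
      have hred : (s + 1 - 1 : ℕ) = s := rfl
      rw [hred] at hxnb hynb
      have hsmem : a + (s : ZMod n) ∈ (C.rotate _ hmem).support := by
        rcases hxnb with hx | hx
        · exact hx ▸ hxs
        · rcases hynb with hy | hy
          · exact hy ▸ hys
          · exact absurd (hx.trans hy.symm) hxy
      exact ih (by omega) (by omega) hC (mem_support_rotate hmem hsmem)

lemma avoid_short (hH : ∀ i : ZMod n, G.Adj i (i + 1)) (hA : IsArc G a L) (hL3 : 3 ≤ L)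
    {v : ZMod n} {C : G.Walk v v} (hC : C.IsCycle) (hav : a + 1 ∉ C.support) :
    C.length + L ≤ n + 1 := by
  classical
  have hLn := hA.1
  have hall : ∀ s : ℕ, 1 ≤ s → s < L → a + (s : ZMod n) ∉ C.support :=
    fun s h1 hs hmem => hav (interior_reach hH hA hL3 s h1 hs hC hmem)
  set S : Finset (ZMod n) := C.support.tail.toFinset with hS
  have hSnodup := hC.support_nodup
  have hScard : S.card = C.length := by
    rw [hS, List.toFinset_card_of_nodup hSnodup, List.length_tail, Walk.length_support]
    omega
  set T : Finset (ZMod n) := (Finset.Ico 1 L).image (fun s : ℕ => a + (s : ZMod n)) with hT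
  have hTcard : T.card = L - 1 := by
    rw [hT, Finset.card_image_of_injOn, Nat.card_Ico]
    intro s hs t ht hst
    rw [Finset.mem_coe, Finset.mem_Ico] at hs ht
    exact (zmod_add_inj (by omega) (by omega)).mp hst
  have hdisj : Disjoint S T := by
    rw [Finset.disjoint_right]
    intro z hzT hzS
    rw [hT, Finset.mem_image] at hzT
    obtain ⟨s, hs, rfl⟩ := hzT
    rw [Finset.mem_Ico] at hs
    apply hall s hs.1 hs.2
    rw [hS, List.mem_toFinset] at hzS
    rw [Walk.support_eq_cons]
    exact List.mem_cons_of_mem _ hzS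
  have hunion : (S ∪ T).card = C.length + (L - 1) := by
    rw [Finset.card_union_of_disjoint hdisj, hScard, hTcard]
  have hle : (S ∪ T).card ≤ n := by
    have := Finset.card_le_univ (S ∪ T)
    rwa [Fintype.card_eq_nat_card, Nat.card_zmod] at this
  omega

end main


/-- If `G` is pancyclic on `n > 6` vertices with the standard Hamiltonian cycle on
`ZMod n`, and `A = (a, a+1, …, a+L)` is an arc whose two endpoints are joined by a
chord, with `L = |A| ≥ (n+2)/3` edges, then the graph `G_A` obtained by contracting
one edge of `A` is pancyclic on `n - 1` vertices. -/
theorem stmt_9 {n : ℕ} [NeZero n] (hn : 6 < n) (G : SimpleGraph (ZMod n))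
    (hH : ∀ i : ZMod n, G.Adj i (i + 1)) (hG : Pancyclic G)
    (a : ZMod n) (L : ℕ) (hA : IsArc G a L)
    (hchord : G.Adj a (a + (L : ZMod n)))
    (hlen : n + 2 ≤ 3 * L) :
    Pancyclic (contractEdge G (a + 1) a) ∧
    Fintype.card {x : ZMod n // x ≠ a + 1} = n - 1 := by
  have hLn := hA.1
  have hL3 : 3 ≤ L := by omega
  have hcard : Fintype.card {x : ZMod n // x ≠ a + 1} = n - 1 := by
    rw [Fintype.card_subtype_compl, ZMod.card, Fintype.card_subtype_eq]
  refine ⟨?_, hcard⟩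
  intro k hk3 hkle
  rw [hcard] at hkle
  obtain ⟨v1, C1, hC1, hC1len⟩ := hG (k+1) (by omega) (by rw [ZMod.card]; omega)
  by_cases h1 : a + 1 ∈ C1.support
  · have hres := contract_cycle hH hA hL3 hC1 h1
    rwa [hC1len, Nat.add_sub_cancel] at hres
  · obtain ⟨v0, C0, hC0, hC0len⟩ := hG k (by omega) (by rw [ZMod.card]; omega)
    by_cases h0 : a + 1 ∈ C0.support
    · have hbound : L + 1 ≤ k := by
        obtain ⟨w, hadj, q, hwcyc, hwlen, hweq⟩ := oriented hH hA (by omega) hC0 h0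
        obtain ⟨P, -, hPlen, hP1, -⟩ := arc_decomp hH hA hL3 hwcyc hweq
        omega
      have hk_upper : k + 1 + L ≤ n + 1 := by
        have := avoid_short hH hA hL3 hC1 h1
        omega
      obtain ⟨v2, C2, hC2, hC2len⟩ := hG (k+L-1) (by omega) (by rw [ZMod.card]; omega)
      by_cases h2 : a + 1 ∈ C2.support
      · have hres := chord_cycle hH hA hL3 hchord hC2 h2 (by omega)
        rwa [hC2len, show k + L - 1 - L + 1 = k by omega] at hres
      · exfalso
        have := avoid_short hH hA hL3 hC2 h2
        omega
    · have hv0 : v0 ≠ a + 1 := fun h => h0 (h ▸ C0.start_mem_support)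
      have havoid : ∀ z ∈ C0.support, z ≠ a + 1 := fun z hz hz1 => h0 (hz1 ▸ hz)
      exact ⟨⟨v0, hv0⟩, liftWalk C0 havoid, liftWalk_isCycle havoid hC0,
        by rw [length_liftWalk]; exact hC0len⟩
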